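/- The point EE^c = (A_w^c, F_w^c, F_{pw}^c, M_w^c) with A_w^c = K_a(1 - 1/G_0w), F_w^c = b_f ψ A_w^c / (μ_fw + σ), F_{pw}^c = b_f ψ σ A_w^c / ((μ_fw + σ) μ_fw), M_w^c = b_m ψ A_w^c / μ_mw, with all uninfected compartments zero, is an equilibrium of the Wolbachia system when v_w = 1. -/

import Mathlib

theorem complete_infection_equilibrium
    (K_a b_f b_m ψ σ μ_a μ_fw μ_mw φ_w : ℝ)
    (hK : 0 < K_a) (hbf : 0 < b_f) (hbm : 0 < b_m) (hψ : 0 < ψ) (hσ : 0 < σ)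
    (hμa : 0 < μ_a) (hμfw : 0 < μ_fw) (hμmw : 0 < μ_mw) (hφw : 0 < φ_w)
    (G_0w : ℝ)
    (hG : G_0w = b_f * (ψ / (μ_a + ψ)) * (σ / (σ + μ_fw)) * (φ_w / μ_fw))
    (hG1 : 1 < G_0w)
    (A_w F_w F_pw M_w : ℝ)
    (hA : A_w = K_a * (1 - 1 / G_0w))
    (hF : F_w = b_f * ψ * A_w / (μ_fw + σ))
    (hFp : F_pw = b_f * ψ * σ * A_w / ((μ_fw + σ) * μ_fw))
    (hM : M_w = b_m * ψ * A_w / μ_mw) :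
    φ_w * (1 - A_w / K_a) * F_pw - (μ_a + ψ) * A_w = 0 ∧
    b_f * ψ * A_w - (σ + μ_fw) * F_w = 0 ∧
    σ * F_w - μ_fw * F_pw = 0 ∧
    b_m * ψ * A_w - μ_mw * M_w = 0 := by
  have hG0 : G_0w ≠ 0 := by linarith
  have h1 : μ_a + ψ ≠ 0 := by positivity
  have h2 : σ + μ_fw ≠ 0 := by positivity
  have h3 : μ_fw + σ ≠ 0 := by positivity
  refine ⟨?_, ?_, ?_, ?_⟩
  · subst hFp hA
    field_simp
    rw [hG]
    field_simp
    ring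
  · subst hF; field_simp; ring
  · subst hF hFp; field_simp; ring
  · subst hM; field_simp; ring
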